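/- Let d ≥ 1 and p ∈ (0,2). For all x, z ∈ ℝ^d with 2|z| ≤ |x| one has |V_p(x+z) + V_p(x−z) − 2 V_p(x)| ≤ 3p |z|² (1 + |x|²/4)^{p/2 − 1}. -/

import Mathlib

open MeasureTheory Real
open scoped RealInnerProductSpace


lemma key1 (p a b c : ℝ) (hp0 : 0 < p) (hp2 : p < 2) (ha : 0 ≤ a) (hc : 0 ≤ c)
    (hb : b ^ 2 ≤ a * c) (hac : 4 * c ≤ a) :
    |(1 + a + 2 * b + c) ^ (p / 2) + (1 + a - 2 * b + c) ^ (p / 2)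
        - 2 * (1 + a) ^ (p / 2)|
      ≤ 3 * p * c * (1 + a / 4) ^ (p / 2 - 1) := by
  set q : ℝ → ℝ := fun t => 1 + a + 2 * b * t + c * t ^ 2 with hqdef
  have hqpos : ∀ t, 0 < q t := by
    intro t
    rcases eq_or_lt_of_le hc with h0 | h0
    · have hb0 : b = 0 := by nlinarith [sq_nonneg b]
      simp only [hqdef, hb0]; nlinarith
    · simp only [hqdef]; nlinarith [sq_nonneg (b + c * t), mul_pos h0 h0]
  have hqlb : ∀ t ∈ Set.Icc (-1 : ℝ) 1, 1 + a / 4 ≤ q t := by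
    intro t ht
    have ht2 : t ^ 2 ≤ 1 := by rcases ht with ⟨h1, h2⟩; nlinarith
    rcases eq_or_lt_of_le hc with h0 | h0
    · have hb0 : b = 0 := by nlinarith [sq_nonneg b]
      simp only [hqdef, hb0]; nlinarith
    · simp only [hqdef]
      nlinarith [sq_nonneg (b + 2 * c * t), mul_pos h0 h0,
        mul_le_mul_of_nonneg_left ht2 (le_of_lt (mul_pos h0 h0))]
  have hQ4 : (0:ℝ) < 1 + a / 4 := by linarith
  have hq' : ∀ t, HasDerivAt q (2 * b + 2 * c * t) t := by
    intro t
    have h1 : HasDerivAt (fun t : ℝ => 1 + a + 2 * b * t + c * t ^ 2)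
        (0 + 2 * b * 1 + c * (2 * t ^ 1)) t :=
      (((hasDerivAt_const t (1 + a)).add ((hasDerivAt_id t).const_mul (2*b))).add
        ((hasDerivAt_pow 2 t).const_mul c))
    convert h1 using 1
    ring
  set f : ℝ → ℝ := fun t => q t ^ (p / 2) with hfdef
  set f1 : ℝ → ℝ := fun t => (2 * b + 2 * c * t) * (p / 2) * q t ^ (p / 2 - 1) with hf1def
  set f2 : ℝ → ℝ := fun t =>
      (2 * b + 2 * c * t) * (p / 2 - 1) * q t ^ (p / 2 - 2) * ((2 * b + 2 * c * t) * (p / 2))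
        + (2 * c) * (p / 2) * q t ^ (p / 2 - 1) with hf2def
  have hf : ∀ t, HasDerivAt f (f1 t) t := fun t =>
    (hq' t).rpow_const (Or.inl (hqpos t).ne')
  have hf1 : ∀ t, HasDerivAt f1 (f2 t) t := by
    intro t
    have h1 : HasDerivAt (fun t => q t ^ (p / 2 - 1))
        ((2 * b + 2 * c * t) * (p / 2 - 1) * q t ^ (p / 2 - 1 - 1)) t :=
      (hq' t).rpow_const (Or.inl (hqpos t).ne')
    have h2 : HasDerivAt (fun t : ℝ => (2 * b + 2 * c * t) * (p / 2)) (2 * c * (p / 2)) t := by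
      have := ((hasDerivAt_id t).const_mul (2 * c)).const_add (2 * b)
      exact (this.mul_const (p / 2)).congr_deriv (by ring) |>.congr_deriv rfl
    have h3 := (h2.mul h1)
    refine h3.congr_deriv ?_
    simp only [hf2def]
    ring_nf
  set M : ℝ := 3 * p * c * (1 + a / 4) ^ (p / 2 - 1) with hMdef
  -- bound on the second derivative
  have hbound : ∀ t ∈ Set.Icc (-1 : ℝ) 1, |f2 t| ≤ M := by
    intro t ht
    have hQ := hqpos t
    have hQl := hqlb t ht
    have hsq : (2 * b + 2 * c * t) ^ 2 ≤ 4 * c * q t := by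
      simp only [hqdef]
      nlinarith [sq_nonneg (b + c * t)]
    have hpow2 : q t ^ (p / 2 - 2) * q t = q t ^ (p / 2 - 1) := by
      rw [← Real.rpow_add_one hQ.ne' (p / 2 - 2)]
      congr 1
      ring
    have hpowpos1 : (0:ℝ) < q t ^ (p / 2 - 1) := Real.rpow_pos_of_pos hQ _
    have hpowpos2 : (0:ℝ) < q t ^ (p / 2 - 2) := Real.rpow_pos_of_pos hQ _
    have h1 : |f2 t| ≤ (1 - p / 2) * (p / 2) * ((2 * b + 2 * c * t) ^ 2 * q t ^ (p / 2 - 2))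
        + p * c * q t ^ (p / 2 - 1) := by
      have habs : |f2 t| ≤ |(2 * b + 2 * c * t) * (p / 2 - 1) * q t ^ (p / 2 - 2)
          * ((2 * b + 2 * c * t) * (p / 2))| + |(2 * c) * (p / 2) * q t ^ (p / 2 - 1)| := by
        simp only [hf2def]; exact abs_add_le _ _
      have e1 : |(2 * b + 2 * c * t) * (p / 2 - 1) * q t ^ (p / 2 - 2)
          * ((2 * b + 2 * c * t) * (p / 2))|
          = (1 - p / 2) * (p / 2) * ((2 * b + 2 * c * t) ^ 2 * q t ^ (p / 2 - 2)) := by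
        rw [show (2 * b + 2 * c * t) * (p / 2 - 1) * q t ^ (p / 2 - 2)
            * ((2 * b + 2 * c * t) * (p / 2))
            = -((1 - p / 2) * (p / 2) * ((2 * b + 2 * c * t) ^ 2 * q t ^ (p / 2 - 2))) by ring,
          abs_neg]
        apply abs_of_nonneg
        have h1 : (0:ℝ) ≤ 1 - p / 2 := by linarith
        have h2 : (0:ℝ) ≤ p / 2 := by linarith
        positivity
      have e2 : |(2 * c) * (p / 2) * q t ^ (p / 2 - 1)| = p * c * q t ^ (p / 2 - 1) := by
        rw [show (2 * c) * (p / 2) * q t ^ (p / 2 - 1) = p * c * q t ^ (p / 2 - 1) by ring]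
        apply abs_of_nonneg
        positivity
      rw [e1, e2] at habs
      exact habs
    have h2 : (2 * b + 2 * c * t) ^ 2 * q t ^ (p / 2 - 2) ≤ 4 * c * q t ^ (p / 2 - 1) := by
      calc (2 * b + 2 * c * t) ^ 2 * q t ^ (p / 2 - 2)
          ≤ (4 * c * q t) * q t ^ (p / 2 - 2) :=
            mul_le_mul_of_nonneg_right hsq hpowpos2.le
        _ = 4 * c * (q t ^ (p / 2 - 2) * q t) := by ring
        _ = 4 * c * q t ^ (p / 2 - 1) := by rw [hpow2]
    have h3 : q t ^ (p / 2 - 1) ≤ (1 + a / 4) ^ (p / 2 - 1) :=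
      Real.rpow_le_rpow_of_nonpos hQ4 hQl (by linarith)
    have hcoef : (0:ℝ) ≤ (1 - p / 2) * (p / 2) := by nlinarith
    calc |f2 t| ≤ (1 - p / 2) * (p / 2) * ((2 * b + 2 * c * t) ^ 2 * q t ^ (p / 2 - 2))
        + p * c * q t ^ (p / 2 - 1) := h1
      _ ≤ (1 - p / 2) * (p / 2) * (4 * c * q t ^ (p / 2 - 1))
          + p * c * q t ^ (p / 2 - 1) := by
          have := mul_le_mul_of_nonneg_left h2 hcoef
          linarith
      _ = (3 * p - p ^ 2) * c * q t ^ (p / 2 - 1) := by ring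
      _ ≤ 3 * p * c * q t ^ (p / 2 - 1) := by nlinarith [mul_nonneg hc hpowpos1.le]
      _ ≤ M := by
          simp only [hMdef]
          exact mul_le_mul_of_nonneg_left h3 (by positivity)
  have hM0 : 0 ≤ M := by positivity
  set F : ℝ → ℝ := fun t => f t + f (-t) - 2 * f 0 with hFdef
  have hF' : ∀ t, HasDerivAt F (f1 t - f1 (-t)) t := by
    intro t
    have h1 : HasDerivAt (fun t : ℝ => f (-t)) (f1 (-t) * (-1)) t :=
      (hf (-t)).comp t (hasDerivAt_neg t)
    have := ((hf t).add h1).sub_const (2 * f 0)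
    refine this.congr_deriv ?_
    ring
  have hF'bound : ∀ t ∈ Set.Icc (0:ℝ) 1, |f1 t - f1 (-t)| ≤ M * (2 * t) := by
    intro t ht
    have h1 : -t ∈ Set.Icc (-1:ℝ) 1 := ⟨by linarith [ht.2], by linarith [ht.1]⟩
    have h2 : t ∈ Set.Icc (-1:ℝ) 1 := ⟨by linarith [ht.1], ht.2⟩
    have := (convex_Icc (-1:ℝ) 1).norm_image_sub_le_of_norm_hasDerivWithin_le
      (f' := f2) (fun s _ => (hf1 s).hasDerivWithinAt)
      (fun s hs => by simpa using hbound s hs) h1 h2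
    simp only [Real.norm_eq_abs] at this
    calc |f1 t - f1 (-t)| ≤ M * |t - -t| := this
      _ = M * (2 * t) := by
          rw [show t - -t = 2 * t by ring, abs_of_nonneg (by linarith [ht.1])]
  have hmono : ∀ (ε : ℝ), |ε| = 1 →
      MonotoneOn (fun t => M * t ^ 2 + ε * F t) (Set.Icc (0:ℝ) 1) := by
    intro ε hε
    have hGd : ∀ t : ℝ, HasDerivAt (fun t => M * t ^ 2 + ε * F t)
        (M * (2 * t ^ 1) + ε * (f1 t - f1 (-t))) t := fun t =>
      (((hasDerivAt_pow 2 t).const_mul M)).add ((hF' t).const_mul ε)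
    have hGdiff : Differentiable ℝ (fun t => M * t ^ 2 + ε * F t) := fun t =>
      (hGd t).differentiableAt
    apply monotoneOn_of_deriv_nonneg (convex_Icc 0 1) hGdiff.continuous.continuousOn
      hGdiff.differentiableOn
    intro t ht
    rw [interior_Icc] at ht
    rw [(hGd t).deriv]
    have hb := hF'bound t ⟨ht.1.le, ht.2.le⟩
    have habs : |ε * (f1 t - f1 (-t))| ≤ M * (2 * t) := by
      rw [abs_mul, hε, one_mul]; exact hb
    have := neg_abs_le (ε * (f1 t - f1 (-t)))
    simp only [pow_one]
    linarith
  have hF0 : F 0 = 0 := by simp only [hFdef, neg_zero]; ring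
  have hmem0 : (0:ℝ) ∈ Set.Icc (0:ℝ) 1 := by norm_num
  have hmem1 : (1:ℝ) ∈ Set.Icc (0:ℝ) 1 := by norm_num
  have hup' : M * 0 ^ 2 + (-1) * F 0 ≤ M * 1 ^ 2 + (-1) * F 1 :=
    hmono (-1) (by norm_num) hmem0 hmem1 zero_le_one
  have hlo' : M * 0 ^ 2 + 1 * F 0 ≤ M * 1 ^ 2 + 1 * F 1 :=
    hmono 1 (by norm_num) hmem0 hmem1 zero_le_one
  rw [hF0] at hup' hlo'
  have hFabs : |F 1| ≤ M := by
    rw [abs_le]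
    constructor
    · linarith
    · linarith
  have hgoal : (1 + a + 2 * b + c) ^ (p / 2) + (1 + a - 2 * b + c) ^ (p / 2)
      - 2 * (1 + a) ^ (p / 2) = F 1 := by
    simp only [hFdef, hfdef, hqdef]
    norm_num
    ring_nf
  rw [hgoal]
  exact hFabs

/-- For `p ∈ (0,2)` and `x, z ∈ ℝ^d` with `2|z| ≤ |x|`, one has
`|V_p(x+z) + V_p(x-z) - 2 V_p(x)| ≤ 3p |z|² (1 + |x|²/4)^(p/2 - 1)`,
where `V_p(x) = (1+|x|²)^(p/2)`. -/
theorem stmt_2 (d : ℕ) (hd : 1 ≤ d) (p : ℝ) (hp : p ∈ Set.Ioo (0 : ℝ) 2)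
    (x z : EuclideanSpace ℝ (Fin d)) (hxz : 2 * ‖z‖ ≤ ‖x‖) :
    |(1 + ‖x + z‖ ^ 2) ^ (p / 2) + (1 + ‖x - z‖ ^ 2) ^ (p / 2)
        - 2 * (1 + ‖x‖ ^ 2) ^ (p / 2)|
      ≤ 3 * p * ‖z‖ ^ 2 * (1 + ‖x‖ ^ 2 / 4) ^ (p / 2 - 1) := by
  have hb : ⟪x, z⟫ ^ 2 ≤ ‖x‖ ^ 2 * ‖z‖ ^ 2 := by
    have h := abs_real_inner_le_norm x z
    nlinarith [abs_nonneg ⟪x, z⟫, neg_abs_le ⟪x, z⟫, le_abs_self ⟪x, z⟫]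
  have hac : 4 * ‖z‖ ^ 2 ≤ ‖x‖ ^ 2 := by nlinarith [norm_nonneg z, norm_nonneg x]
  have h1 : ‖x + z‖ ^ 2 = ‖x‖ ^ 2 + 2 * ⟪x, z⟫ + ‖z‖ ^ 2 := norm_add_sq_real x z
  have h2 : ‖x - z‖ ^ 2 = ‖x‖ ^ 2 - 2 * ⟪x, z⟫ + ‖z‖ ^ 2 := norm_sub_sq_real x z
  have := key1 p (‖x‖ ^ 2) ⟪x, z⟫ (‖z‖ ^ 2) hp.1 hp.2 (sq_nonneg _) (sq_nonneg _) hb hac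
  rw [h1, h2]
  convert this using 4 <;> ring
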